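/- There exists a constant n₃ > 0 such that for every λ ∈ ℂ and every ρ > 0 one has ∫_ℂ ρ / ( |ζ| (1 + ρ(|ζ| + |ζ|⁻¹)) |ζ−λ| ) dReζ dImζ ≤ n₃, where the integral is with respect to Lebesgue measure on ℂ ≅ ℝ². -/

import Mathlib

open MeasureTheory
open scoped ENNReal

open Metric Set

namespace Stmt16Aux

/-- The key elementary real inequality. -/
lemma key_real {a b : ℝ} (ha : 0 ≤ a) (hb : 0 ≤ b) :
    ((1 + a^2) * b)⁻¹ ≤ (if b ≤ 1 then b⁻¹ else 0) + (32 * ((1+b)^3)⁻¹ + 4 * ((1+a)^3)⁻¹) := by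
  rcases le_or_gt b 1 with hb1 | hb1
  · rw [if_pos hb1]
    have h1 : ((1 + a^2) * b)⁻¹ ≤ b⁻¹ := by
      rcases eq_or_lt_of_le hb with h | h
      · simp [← h]
      · exact inv_anti₀ h (by nlinarith)
    have h2 : (0:ℝ) ≤ 32 * ((1+b)^3)⁻¹ := by positivity
    have h3 : (0:ℝ) ≤ 4 * ((1+a)^3)⁻¹ := by positivity
    linarith
  · rw [if_neg (not_le.2 hb1)]
    rcases le_or_gt b (2*a) with hab | hab
    · have h1 : ((1 + a^2) * b)⁻¹ ≤ 32 * ((1+b)^3)⁻¹ := by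
        rw [show (32:ℝ) * ((1+b)^3)⁻¹ = ((1+b)^3 / 32)⁻¹ by rw [inv_div]; ring]
        apply inv_anti₀ (by positivity)
        rw [div_le_iff₀ (by norm_num)]
        have h4 : b^2 ≤ 4*a^2 := by nlinarith [mul_self_le_mul_self hb hab]
        have h5 : 8*b*b^2 ≤ 8*b*(4*a^2) :=
          mul_le_mul_of_nonneg_left h4 (by linarith)
        nlinarith [h5, hb1, mul_nonneg (sq_nonneg (b-1)) hb]
      have h3 : (0:ℝ) ≤ 4 * ((1+a)^3)⁻¹ := by positivity
      linarith
    · have h1 : ((1 + a^2) * b)⁻¹ ≤ 4 * ((1+a)^3)⁻¹ := by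
        rw [show (4:ℝ) * ((1+a)^3)⁻¹ = ((1+a)^3 / 4)⁻¹ by rw [inv_div]; ring]
        apply inv_anti₀ (by positivity)
        rw [div_le_iff₀ (by norm_num)]
        nlinarith [sq_nonneg (1 - a), sq_nonneg a, sq_nonneg (a-1)]
      have h2 : (0:ℝ) ≤ 32 * ((1+b)^3)⁻¹ := by positivity
      linarith

/-- Finiteness of the singular integral of `|ζ|⁻¹` over the unit ball. -/
lemma ball_lt_top : ∫⁻ ζ : ℂ, (closedBall (0:ℂ) 1).indicator
    (fun ζ => ENNReal.ofReal (‖ζ‖)⁻¹) ζ < ⊤ := by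
  rw [lintegral_indicator measurableSet_closedBall]
  rw [lintegral_eq_lintegral_meas_lt _ (ae_of_all _ fun ζ => by positivity)
    (show AEMeasurable (fun ζ : ℂ => ‖ζ‖⁻¹) (volume.restrict (closedBall (0:ℂ) 1)) from
      continuous_norm.measurable.inv.aemeasurable)]
  have hsub : ∀ t : ℝ, 0 < t → {ζ : ℂ | t < (‖ζ‖)⁻¹} ⊆ closedBall 0 t⁻¹ := by
    intro t ht ζ hζ
    simp only [mem_setOf_eq] at hζ
    have habs : ‖ζ‖ < t⁻¹ := by
      rcases eq_or_lt_of_le (norm_nonneg ζ) with h | h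
      · rw [← h]; positivity
      · exact (lt_inv_comm₀ ht h).mp hζ
    simpa [Complex.dist_eq] using habs.le
  calc ∫⁻ t in Ioi 0, (volume.restrict (closedBall (0:ℂ) 1)) {ζ : ℂ | t < (‖ζ‖)⁻¹}
      ≤ (∫⁻ _t in Ioc (0:ℝ) 1, (volume (closedBall (0:ℂ) 1)))
        + ∫⁻ t in Ioi (1:ℝ), ENNReal.ofReal (Real.pi * (t^(-2:ℝ))) := by
        rw [show Ioi (0:ℝ) = Ioc 0 1 ∪ Ioi 1 by rw [Ioc_union_Ioi_eq_Ioi]; norm_num]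
        refine le_trans (lintegral_union_le _ _ _) (add_le_add ?_ ?_)
        · apply setLIntegral_mono' measurableSet_Ioc
          intro t _
          exact le_trans (measure_mono (subset_univ _)) (by rw [Measure.restrict_apply_univ])
        · apply setLIntegral_mono' measurableSet_Ioi
          intro t ht
          have ht1 : (1:ℝ) < t := ht
          have hb : (volume.restrict (closedBall (0:ℂ) 1)) {ζ : ℂ | t < (‖ζ‖)⁻¹}
              ≤ volume (closedBall (0:ℂ) t⁻¹) :=
            le_trans (Measure.restrict_apply_le _ _) (measure_mono (hsub t (by linarith)))
          refine hb.trans ?_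
          rw [Complex.volume_closedBall]
          have h2 : (ENNReal.ofReal t⁻¹)^2 = ENNReal.ofReal (t^(-2:ℝ)) := by
            rw [← ENNReal.ofReal_pow (by positivity)]
            congr 1
            rw [Real.rpow_neg (by linarith), Real.rpow_two]
            ring
          rw [h2, ENNReal.ofReal_mul Real.pi_nonneg, mul_comm]
          gcongr
          refine le_of_eq ?_
          rw [ENNReal.ofReal]
          norm_cast
          rw [← NNReal.coe_real_pi, Real.toNNReal_coe]
      _ < ⊤ := by
        apply ENNReal.add_lt_top.2
        constructor
        · rw [setLIntegral_const]
          exact ENNReal.mul_lt_top measure_closedBall_lt_top (by simp [Real.volume_Ioc])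
        · have hint : IntegrableOn (fun t : ℝ => Real.pi * t ^ (-2:ℝ)) (Ioi 1) :=
            (integrableOn_Ioi_rpow_of_lt (by norm_num) one_pos).const_mul _
          exact hint.lintegral_lt_top

/-- Finiteness of the integral of `(1+|ζ|)⁻³` over `ℂ`. -/
lemma cube_lt_top : ∫⁻ ζ : ℂ, ENNReal.ofReal (((1 + ‖ζ‖)^3)⁻¹) < ⊤ := by
  have h := finite_integral_one_add_norm (E := ℂ) (μ := volume) (r := 3)
    (by norm_num [Complex.finrank_real_complex])
  refine lt_of_le_of_lt (le_of_eq ?_) h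
  refine lintegral_congr fun ζ => ?_
  congr 1
  rw [Real.rpow_neg (by positivity), show ((3:ℝ)) = ((3:ℕ):ℝ) by norm_num, Real.rpow_natCast]

lemma meas_abs_sub (l : ℂ) : Measurable fun ζ : ℂ => ‖ζ - l‖ :=
  continuous_norm.measurable.comp (measurable_id.sub measurable_const)

lemma meas_cube (l : ℂ) :
    Measurable fun ζ : ℂ => ENNReal.ofReal (((1 + ‖ζ - l‖)^3)⁻¹) :=
  Measurable.ennreal_ofReal (((measurable_const.add (meas_abs_sub l)).pow_const 3).inv)

lemma meas_cube0 :
    Measurable fun ζ : ℂ => ENNReal.ofReal (((1 + ‖ζ‖)^3)⁻¹) :=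
  Measurable.ennreal_ofReal
    (((measurable_const.add continuous_norm.measurable).pow_const 3).inv)

end Stmt16Aux

/-- estimate (11.6): uniform bound on
`∫_ℂ ρ/(|ζ|(1+ρ(|ζ|+|ζ|⁻¹))|ζ−λ|)`. -/
theorem stmt_16 :
    ∃ n₃ : ℝ, 0 < n₃ ∧
      ∀ (l : ℂ) (ρ : ℝ), 0 < ρ →
        ∫⁻ ζ : ℂ, ENNReal.ofReal ρ /
            (ENNReal.ofReal (‖ζ‖) *
              ENNReal.ofReal (1 + ρ * (‖ζ‖ + (‖ζ‖)⁻¹)) *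
              ENNReal.ofReal (‖ζ - l‖))
          ≤ ENNReal.ofReal n₃ := by
  classical
  set C₁ : ℝ≥0∞ := ∫⁻ ζ : ℂ, (closedBall (0:ℂ) 1).indicator
    (fun ζ => ENNReal.ofReal (‖ζ‖)⁻¹) ζ with hC₁def
  set J : ℝ≥0∞ := ∫⁻ ζ : ℂ, ENNReal.ofReal (((1 + ‖ζ‖)^3)⁻¹) with hJdef
  set K : ℝ≥0∞ := C₁ + 32 * J + 4 * J with hKdef
  have hK : K < ⊤ := by
    have h1 := Stmt16Aux.ball_lt_top
    have h2 := Stmt16Aux.cube_lt_top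
    rw [hKdef]
    refine ENNReal.add_lt_top.2 ⟨ENNReal.add_lt_top.2 ⟨h1, ?_⟩, ?_⟩
    · exact ENNReal.mul_lt_top (by norm_num) h2
    · exact ENNReal.mul_lt_top (by norm_num) h2
  refine ⟨K.toReal + 1, by positivity, ?_⟩
  intro l ρ hρ
  -- Step 1: a.e. pointwise bound by `((1+|ζ|²)|ζ-l|)⁻¹`.
  have hae : ∀ᵐ ζ : ℂ, ζ ∉ ({0, l} : Set ℂ) := by
    have : volume ({0, l} : Set ℂ) = 0 := (Set.toFinite _).measure_zero volume
    exact measure_eq_zero_iff_ae_notMem.mp this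
  have step1 : ∫⁻ ζ : ℂ, ENNReal.ofReal ρ /
          (ENNReal.ofReal (‖ζ‖) *
            ENNReal.ofReal (1 + ρ * (‖ζ‖ + (‖ζ‖)⁻¹)) *
            ENNReal.ofReal (‖ζ - l‖))
      ≤ ∫⁻ ζ : ℂ, ENNReal.ofReal (((1 + (‖ζ‖)^2) * ‖ζ - l‖)⁻¹) := by
    refine lintegral_mono_ae ?_
    filter_upwards [hae] with ζ hζ
    simp only [Set.mem_insert_iff, Set.mem_singleton_iff, not_or] at hζ
    obtain ⟨h0, hl⟩ := hζ
    set a : ℝ := ‖ζ‖ with hadef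
    set b : ℝ := ‖ζ - l‖ with hbdef
    have ha : 0 < a := norm_pos_iff.mpr h0
    have hb : 0 < b := norm_pos_iff.mpr (sub_ne_zero.2 hl)
    have hc : 0 < 1 + ρ * (a + a⁻¹) := by positivity
    rw [← ENNReal.ofReal_mul ha.le, ← ENNReal.ofReal_mul (by positivity),
      ← ENNReal.ofReal_div_of_pos (by positivity)]
    apply ENNReal.ofReal_le_ofReal
    have hexp : a * (1 + ρ * (a + a⁻¹)) * b = a*b + ρ*((1+a^2)*b) := by
      field_simp
      ring
    have hge : ρ * ((1+a^2)*b) ≤ a * (1 + ρ * (a + a⁻¹)) * b := by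
      rw [hexp]
      nlinarith [mul_pos ha hb]
    calc ρ / (a * (1 + ρ * (a + a⁻¹)) * b)
        ≤ ρ / (ρ * ((1+a^2)*b)) := by
          apply div_le_div_of_nonneg_left hρ.le (by positivity) hge
      _ = ((1+a^2)*b)⁻¹ := by
          have hX : ((1+a^2)*b) ≠ 0 := by positivity
          field_simp
  -- Step 2: pointwise splitting.
  have step2 : ∫⁻ ζ : ℂ, ENNReal.ofReal (((1 + (‖ζ‖)^2) * ‖ζ - l‖)⁻¹)
      ≤ ∫⁻ ζ : ℂ, ((closedBall l 1).indicator
            (fun ζ => ENNReal.ofReal (‖ζ - l‖)⁻¹) ζ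
          + (ENNReal.ofReal (32 * ((1 + ‖ζ - l‖)^3)⁻¹)
            + ENNReal.ofReal (4 * ((1 + ‖ζ‖)^3)⁻¹))) := by
    refine lintegral_mono fun ζ => ?_
    set a : ℝ := ‖ζ‖ with hadef
    set b : ℝ := ‖ζ - l‖ with hbdef
    have key := Stmt16Aux.key_real (a := a) (b := b) (norm_nonneg ζ)
      (norm_nonneg (ζ - l))
    calc ENNReal.ofReal (((1 + a^2) * b)⁻¹)
        ≤ ENNReal.ofReal ((if b ≤ 1 then b⁻¹ else 0)
            + (32 * ((1+b)^3)⁻¹ + 4 * ((1+a)^3)⁻¹)) := ENNReal.ofReal_le_ofReal key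
      _ ≤ _ := by
          rw [ENNReal.ofReal_add (by positivity) (by positivity),
            ENNReal.ofReal_add (by positivity) (by positivity)]
          gcongr
          rw [Set.indicator_apply]
          by_cases hmem : ζ ∈ closedBall l 1
          · have : b ≤ 1 := by simpa [hbdef, Complex.dist_eq] using hmem
            rw [if_pos hmem, if_pos this]
          · have : ¬ b ≤ 1 := by
              simpa [hbdef, Complex.dist_eq] using hmem
            rw [if_neg hmem, if_neg this]
            simp
  -- Step 3: compute the right-hand side.
  have meas1 : Measurable fun ζ : ℂ => (closedBall l 1).indicator
      (fun ζ => ENNReal.ofReal (‖ζ - l‖)⁻¹) ζ := by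
    exact Measurable.indicator
      (Measurable.ennreal_ofReal (Stmt16Aux.meas_abs_sub l).inv) measurableSet_closedBall
  have meas2 : Measurable fun ζ : ℂ =>
      ENNReal.ofReal (32 * ((1 + ‖ζ - l‖)^3)⁻¹) :=
    Measurable.ennreal_ofReal
      (measurable_const.mul (((measurable_const.add (Stmt16Aux.meas_abs_sub l)).pow_const 3).inv))
  have meas3 : Measurable fun ζ : ℂ =>
      ENNReal.ofReal (4 * ((1 + ‖ζ‖)^3)⁻¹) :=
    Measurable.ennreal_ofReal
      (measurable_const.mul
        (((measurable_const.add continuous_norm.measurable).pow_const 3).inv))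
  have step3 : ∫⁻ ζ : ℂ, ((closedBall l 1).indicator
            (fun ζ => ENNReal.ofReal (‖ζ - l‖)⁻¹) ζ
          + (ENNReal.ofReal (32 * ((1 + ‖ζ - l‖)^3)⁻¹)
            + ENNReal.ofReal (4 * ((1 + ‖ζ‖)^3)⁻¹))) = K := by
    rw [lintegral_add_left meas1, lintegral_add_left meas2]
    have e1 : ∫⁻ ζ : ℂ, (closedBall l 1).indicator
        (fun ζ => ENNReal.ofReal (‖ζ - l‖)⁻¹) ζ = C₁ := by
      have : ∀ ζ : ℂ, (closedBall l 1).indicator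
          (fun ζ => ENNReal.ofReal (‖ζ - l‖)⁻¹) ζ
          = (closedBall (0:ℂ) 1).indicator
              (fun z => ENNReal.ofReal (‖z‖)⁻¹) (ζ - l) := by
        intro ζ
        rw [Set.indicator_apply, Set.indicator_apply]
        congr 1
        simp [Complex.dist_eq, mem_closedBall]
      simp_rw [this, sub_eq_add_neg]
      rw [hC₁def]
      exact lintegral_add_right_eq_self _ (-l)
    have e2 : ∫⁻ ζ : ℂ, ENNReal.ofReal (32 * ((1 + ‖ζ - l‖)^3)⁻¹) = 32 * J := by
      have : ∀ ζ : ℂ, ENNReal.ofReal (32 * ((1 + ‖ζ - l‖)^3)⁻¹)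
          = (32 : ℝ≥0∞) * ENNReal.ofReal (((1 + ‖ζ - l‖)^3)⁻¹) := by
        intro ζ
        rw [ENNReal.ofReal_mul (by norm_num)]
        norm_num
      simp_rw [this]
      rw [lintegral_const_mul _ (Stmt16Aux.meas_cube l)]
      congr 1
      simp_rw [sub_eq_add_neg]
      rw [hJdef]
      exact lintegral_add_right_eq_self
        (fun z => ENNReal.ofReal (((1 + ‖z‖)^3)⁻¹)) (-l)
    have e3 : ∫⁻ ζ : ℂ, ENNReal.ofReal (4 * ((1 + ‖ζ‖)^3)⁻¹) = 4 * J := by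
      have : ∀ ζ : ℂ, ENNReal.ofReal (4 * ((1 + ‖ζ‖)^3)⁻¹)
          = (4 : ℝ≥0∞) * ENNReal.ofReal (((1 + ‖ζ‖)^3)⁻¹) := by
        intro ζ
        rw [ENNReal.ofReal_mul (by norm_num)]
        norm_num
      simp_rw [this]
      rw [hJdef]
      exact lintegral_const_mul _ Stmt16Aux.meas_cube0
    rw [e1, e2, e3, hKdef, add_assoc]
  -- Conclusion.
  refine le_trans step1 (le_trans step2 (le_of_eq step3 |>.trans ?_))
  conv_lhs => rw [← ENNReal.ofReal_toReal hK.ne]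
  exact ENNReal.ofReal_le_ofReal (by linarith)
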